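/- For every fixed θ ∈ ℝ^d and every t > 0, the norm of the OLS stochastic gradient is α-regularly varying: lim_{z→∞} P(‖∇ℓ(θ,x,ε)‖ > t·z) / P(‖∇ℓ(θ,x,ε)‖ > z) = t^{−α}. -/

import Mathlib

open MeasureTheory ProbabilityTheory Filter Topology Set

/-- For the OLS stochastic gradient `∇ℓ(θ,x,ε) = (⟪x, θ-θ*⟫ - ε) • x`,
its norm is α-regularly varying:
`lim_{z→∞} P(‖∇ℓ‖ > t z) / P(‖∇ℓ‖ > z) = t^{-α}` for every `t > 0`. -/
theorem ols_norm_regular_varying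
    {d : ℕ} {Ω : Type*} [MeasurableSpace Ω] (P : Measure Ω) [IsProbabilityMeasure P]
    (x : Ω → EuclideanSpace ℝ (Fin d)) (ε : Ω → ℝ)
    (hxmeas : Measurable x) (hεmeas : Measurable ε)
    (hindep : IndepFun x ε P)
    (K : Set (EuclideanSpace ℝ (Fin d))) (hK : IsCompact K)
    (hxK : ∀ᵐ ω ∂P, x ω ∈ K)
    (hx0 : P {ω | x ω = 0} = 0)
    (α : ℝ) (hα : α ∈ Set.Ioo (1:ℝ) 2)
    (htail1 : ∀ t : ℝ, 1 ≤ t → (P {ω | |ε ω| > t}).toReal = t ^ (-α))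
    (htail2 : ∀ t : ℝ, 0 ≤ t → t ≤ 1 → (P {ω | |ε ω| > t}).toReal = 1)
    (θ θstar : EuclideanSpace ℝ (Fin d))
    (hpos : ∀ z : ℝ, 0 < P {ω | ‖((inner ℝ (x ω) (θ - θstar) : ℝ) - ε ω) • x ω‖ > z}) :
    ∀ t : ℝ, 0 < t →
      Tendsto (fun z : ℝ =>
          (P {ω | ‖((inner ℝ (x ω) (θ - θstar) : ℝ) - ε ω) • x ω‖ > t * z}).toReal /
          (P {ω | ‖((inner ℝ (x ω) (θ - θstar) : ℝ) - ε ω) • x ω‖ > z}).toReal)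
        atTop (𝓝 (t ^ (-α))) := by
  obtain ⟨hα1, hα2⟩ := hα
  have hαpos : (0:ℝ) < α := by linarith
  -- bound on K
  obtain ⟨M₀, hM₀⟩ : ∃ R, ∀ v ∈ K, ‖v‖ ≤ R := hK.isBounded.exists_norm_le
  set M : ℝ := max M₀ 1 with hMdef
  have hM1 : (1:ℝ) ≤ M := le_max_right _ _
  have hMpos : (0:ℝ) < M := lt_of_lt_of_le one_pos hM1
  have hMK : ∀ v ∈ K, ‖v‖ ≤ M := fun v hv => le_trans (hM₀ v hv) (le_max_left _ _)
  set C : ℝ := M * ‖θ - θstar‖ with hCdef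
  have hC0 : 0 ≤ C := mul_nonneg hMpos.le (norm_nonneg _)
  have haC : ∀ v ∈ K, |(inner ℝ v (θ - θstar) : ℝ)| ≤ C := by
    intro v hv
    calc |(inner ℝ v (θ - θstar) : ℝ)| ≤ ‖v‖ * ‖θ - θstar‖ := abs_real_inner_le_norm _ _
    _ ≤ M * ‖θ - θstar‖ := mul_le_mul_of_nonneg_right (hMK v hv) (norm_nonneg _)
  -- measures
  set μ : Measure (EuclideanSpace ℝ (Fin d)) := P.map x with hμdef
  set ν : Measure ℝ := P.map ε with hνdef
  haveI : IsProbabilityMeasure μ := Measure.isProbabilityMeasure_map hxmeas.aemeasurable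
  haveI : IsProbabilityMeasure ν := Measure.isProbabilityMeasure_map hεmeas.aemeasurable
  have hprod : P.map (fun ω => (x ω, ε ω)) = μ.prod ν :=
    (indepFun_iff_map_prod_eq_prod_map_map hxmeas.aemeasurable hεmeas.aemeasurable).mp hindep
  have hKmeas : MeasurableSet K := hK.isClosed.measurableSet
  have hμK : ∀ᵐ v ∂μ, v ∈ K := (ae_map_iff hxmeas.aemeasurable hKmeas).mpr hxK
  -- the gradient norm function on the product space
  set g : EuclideanSpace ℝ (Fin d) × ℝ → ℝ :=
    fun p => ‖((inner ℝ p.1 (θ - θstar) : ℝ) - p.2) • p.1‖ with hgdef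
  have hgcont : Continuous g := by
    apply Continuous.norm
    exact ((continuous_fst.inner continuous_const).sub continuous_snd).smul continuous_fst
  have hSmeas : ∀ z : ℝ, MeasurableSet {p : EuclideanSpace ℝ (Fin d) × ℝ | g p > z} :=
    fun z => measurableSet_lt measurable_const hgcont.measurable
  -- representation of the tail probability as an integral over slices
  have hrep : ∀ z : ℝ,
      P {ω | ‖((inner ℝ (x ω) (θ - θstar) : ℝ) - ε ω) • x ω‖ > z}
        = ∫⁻ v, ν {e : ℝ | ‖((inner ℝ v (θ - θstar) : ℝ) - e) • v‖ > z} ∂μ := by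
    intro z
    have h1 : {ω | ‖((inner ℝ (x ω) (θ - θstar) : ℝ) - ε ω) • x ω‖ > z}
        = (fun ω => (x ω, ε ω)) ⁻¹' {p | g p > z} := rfl
    rw [h1, ← Measure.map_apply (hxmeas.prodMk hεmeas) (hSmeas z), hprod,
      Measure.prod_apply (hSmeas z)]
    rfl
  -- tail of ν
  have hνtail : ∀ s : ℝ, 1 ≤ s → ν {e : ℝ | |e| > s} = ENNReal.ofReal (s ^ (-α)) := by
    intro s hs
    have hms : MeasurableSet {e : ℝ | |e| > s} := measurableSet_lt measurable_const measurable_abs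
    have h2 : ν {e : ℝ | |e| > s} = P {ω | |ε ω| > s} := by
      rw [hνdef, Measure.map_apply hεmeas hms]; rfl
    rw [h2, ← htail1 s hs, ENNReal.ofReal_toReal (measure_ne_top P _)]
  -- the constant L
  set Lμ : ENNReal := ∫⁻ v, ENNReal.ofReal (‖v‖ ^ α) ∂μ with hLμdef
  have hfmeas : Measurable fun v : EuclideanSpace ℝ (Fin d) => ENNReal.ofReal (‖v‖ ^ α) :=
    ENNReal.measurable_ofReal.comp
      ((continuous_norm.rpow_const (fun v => Or.inr hαpos.le)).measurable)
  have hLμfin : Lμ ≠ ⊤ := by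
    have hb : Lμ ≤ ENNReal.ofReal (M ^ α) := by
      rw [hLμdef]
      calc ∫⁻ v, ENNReal.ofReal (‖v‖ ^ α) ∂μ
          ≤ ∫⁻ _, ENNReal.ofReal (M ^ α) ∂μ := by
            refine lintegral_mono_ae (hμK.mono fun v hv => ?_)
            exact ENNReal.ofReal_le_ofReal
              (Real.rpow_le_rpow (norm_nonneg v) (hMK v hv) hαpos.le)
        _ = ENNReal.ofReal (M ^ α) := by simp
    exact ne_top_of_le_ne_top ENNReal.ofReal_ne_top hb
  have hLμpos : 0 < Lμ := by
    rw [hLμdef, lintegral_pos_iff_support hfmeas]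
    have hsupp : Function.support (fun v : EuclideanSpace ℝ (Fin d) =>
        ENNReal.ofReal (‖v‖ ^ α)) = ({0} : Set (EuclideanSpace ℝ (Fin d)))ᶜ := by
      ext v
      simp only [Function.mem_support, ne_eq, ENNReal.ofReal_eq_zero, not_le, mem_compl_iff,
        mem_singleton_iff]
      constructor
      · intro h hv0
        rw [hv0] at h; simp [Real.zero_rpow hαpos.ne'] at h
      · intro hv0
        exact Real.rpow_pos_of_pos (norm_pos_iff.mpr hv0) α
    rw [hsupp]
    have hμ0 : μ {(0 : EuclideanSpace ℝ (Fin d))} = 0 := by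
      rw [hμdef, Measure.map_apply hxmeas (measurableSet_singleton 0)]
      have : x ⁻¹' {0} = {ω | x ω = 0} := by ext ω; simp
      rw [this, hx0]
    rw [measure_compl (measurableSet_singleton 0) (measure_ne_top μ _), hμ0]
    simp
  set L : ℝ := Lμ.toReal with hLdef
  have hL : 0 < L := ENNReal.toReal_pos hLμpos.ne' hLμfin
  -- F
  set F : ℝ → ℝ := fun z =>
    (P {ω | ‖((inner ℝ (x ω) (θ - θstar) : ℝ) - ε ω) • x ω‖ > z}).toReal with hFdef
  have hFpos : ∀ z, 0 < F z := fun z =>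
    ENNReal.toReal_pos (hpos z).ne' (measure_ne_top P _)
  -- upper bound on F
  have hub : ∀ z : ℝ, M * (C + 1) ≤ z → F z ≤ L * (z - C * M) ^ (-α) := by
    intro z hz
    have hz1 : (1:ℝ) ≤ z := le_trans (by nlinarith) hz
    have hzCM : 0 < z - C * M := by nlinarith
    have hpt : ∀ᵐ v ∂μ, ν {e : ℝ | ‖((inner ℝ v (θ - θstar) : ℝ) - e) • v‖ > z}
        ≤ ENNReal.ofReal (‖v‖ ^ α * (z - C * M) ^ (-α)) := by
      refine hμK.mono fun v hv => ?_
      by_cases hv0 : v = 0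
      · have : {e : ℝ | ‖((inner ℝ v (θ - θstar) : ℝ) - e) • v‖ > z} = ∅ := by
          ext e; simp [hv0]; nlinarith
        rw [this]; simp
      have hnv : 0 < ‖v‖ := norm_pos_iff.mpr hv0
      set a : ℝ := (inner ℝ v (θ - θstar) : ℝ) with hadef
      have hsub : {e : ℝ | ‖(a - e) • v‖ > z} ⊆ {e : ℝ | |e| > z / ‖v‖ - C} := by
        intro e he
        simp only [mem_setOf_eq, norm_smul, Real.norm_eq_abs] at he
        have h1 : z / ‖v‖ < |a - e| := (div_lt_iff₀ hnv).mpr he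
        have h2 : |a - e| ≤ |a| + |e| := abs_sub _ _
        have h3 : |a| ≤ C := haC v hv
        simp only [mem_setOf_eq]; linarith
      have hs1 : (1:ℝ) ≤ z / ‖v‖ - C := by
        have h4 : z / M ≤ z / ‖v‖ :=
          div_le_div_of_nonneg_left (by linarith) hnv (hMK v hv)
        have h5 : C + 1 ≤ z / M := (le_div_iff₀ hMpos).mpr (by linarith [hz])
        linarith
      calc ν {e : ℝ | ‖(a - e) • v‖ > z} ≤ ν {e : ℝ | |e| > z / ‖v‖ - C} :=
            measure_mono hsub
        _ = ENNReal.ofReal ((z / ‖v‖ - C) ^ (-α)) := hνtail _ hs1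
        _ ≤ ENNReal.ofReal (‖v‖ ^ α * (z - C * M) ^ (-α)) := by
            refine ENNReal.ofReal_le_ofReal ?_
            have hbase : (z - C * M) / ‖v‖ ≤ z / ‖v‖ - C := by
              rw [sub_div]
              have : C ≤ C * M / ‖v‖ := (le_div_iff₀ hnv).mpr
                (mul_le_mul_of_nonneg_left (hMK v hv) hC0)
              linarith
            have hbp : 0 < (z - C * M) / ‖v‖ := div_pos hzCM hnv
            calc (z / ‖v‖ - C) ^ (-α) ≤ ((z - C * M) / ‖v‖) ^ (-α) :=
                  Real.rpow_le_rpow_of_nonpos hbp hbase (neg_nonpos.mpr hαpos.le)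
              _ = ‖v‖ ^ α * (z - C * M) ^ (-α) := by
                  rw [Real.div_rpow hzCM.le (norm_nonneg v), Real.rpow_neg (norm_nonneg v),
                    div_inv_eq_mul, mul_comm]
    have hint : P {ω | ‖((inner ℝ (x ω) (θ - θstar) : ℝ) - ε ω) • x ω‖ > z}
        ≤ Lμ * ENNReal.ofReal ((z - C * M) ^ (-α)) := by
      rw [hrep z]
      calc ∫⁻ v, ν {e : ℝ | ‖((inner ℝ v (θ - θstar) : ℝ) - e) • v‖ > z} ∂μ
          ≤ ∫⁻ v, ENNReal.ofReal (‖v‖ ^ α * (z - C * M) ^ (-α)) ∂μ := lintegral_mono_ae hpt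
        _ = ∫⁻ v, ENNReal.ofReal (‖v‖ ^ α) * ENNReal.ofReal ((z - C * M) ^ (-α)) ∂μ := by
            congr 1; ext v
            rw [ENNReal.ofReal_mul (Real.rpow_nonneg (norm_nonneg v) α)]
        _ = Lμ * ENNReal.ofReal ((z - C * M) ^ (-α)) :=
            lintegral_mul_const'' _ hfmeas.aemeasurable
    have := ENNReal.toReal_mono (by
        exact ENNReal.mul_ne_top hLμfin ENNReal.ofReal_ne_top) hint
    rw [ENNReal.toReal_mul, ENNReal.toReal_ofReal (Real.rpow_nonneg hzCM.le _)] at this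
    exact this
  -- lower bound on F
  have hlb : ∀ z : ℝ, M * (C + 1) ≤ z → L * (z + C * M) ^ (-α) ≤ F z := by
    intro z hz
    have hz1 : (1:ℝ) ≤ z := le_trans (by nlinarith) hz
    have hzCM : 0 < z + C * M := by nlinarith
    have hpt : ∀ᵐ v ∂μ, ENNReal.ofReal (‖v‖ ^ α * (z + C * M) ^ (-α))
        ≤ ν {e : ℝ | ‖((inner ℝ v (θ - θstar) : ℝ) - e) • v‖ > z} := by
      refine hμK.mono fun v hv => ?_
      by_cases hv0 : v = 0
      · simp [hv0, Real.zero_rpow hαpos.ne']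
      have hnv : 0 < ‖v‖ := norm_pos_iff.mpr hv0
      set a : ℝ := (inner ℝ v (θ - θstar) : ℝ) with hadef
      have hsup : {e : ℝ | |e| > z / ‖v‖ + C} ⊆ {e : ℝ | ‖(a - e) • v‖ > z} := by
        intro e he
        simp only [mem_setOf_eq] at he
        simp only [mem_setOf_eq, norm_smul, Real.norm_eq_abs]
        have h2 : |e| - |a| ≤ |a - e| := by
          have := abs_sub_abs_le_abs_sub e a
          rw [abs_sub_comm] at this; linarith
        have h3 : |a| ≤ C := haC v hv
        have h4 : z / ‖v‖ < |a - e| := by linarith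
        exact (div_lt_iff₀ hnv).mp h4
      have hs1 : (1:ℝ) ≤ z / ‖v‖ + C := by
        have h4 : z / M ≤ z / ‖v‖ :=
          div_le_div_of_nonneg_left (by linarith) hnv (hMK v hv)
        have h5 : C + 1 ≤ z / M := (le_div_iff₀ hMpos).mpr (by linarith [hz])
        linarith
      calc ENNReal.ofReal (‖v‖ ^ α * (z + C * M) ^ (-α))
          ≤ ENNReal.ofReal ((z / ‖v‖ + C) ^ (-α)) := by
            refine ENNReal.ofReal_le_ofReal ?_
            have hbase : z / ‖v‖ + C ≤ (z + C * M) / ‖v‖ := by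
              rw [add_div]
              have : C ≤ C * M / ‖v‖ := (le_div_iff₀ hnv).mpr
                (mul_le_mul_of_nonneg_left (hMK v hv) hC0)
              linarith
            have hbp : 0 < z / ‖v‖ + C := by positivity
            calc ‖v‖ ^ α * (z + C * M) ^ (-α) = ((z + C * M) / ‖v‖) ^ (-α) := by
                  rw [Real.div_rpow hzCM.le (norm_nonneg v), Real.rpow_neg (norm_nonneg v),
                    div_inv_eq_mul, mul_comm]
              _ ≤ (z / ‖v‖ + C) ^ (-α) :=
                  Real.rpow_le_rpow_of_nonpos hbp hbase (neg_nonpos.mpr hαpos.le)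
        _ = ν {e : ℝ | |e| > z / ‖v‖ + C} := (hνtail _ hs1).symm
        _ ≤ ν {e : ℝ | ‖(a - e) • v‖ > z} := measure_mono hsup
    have hint : Lμ * ENNReal.ofReal ((z + C * M) ^ (-α))
        ≤ P {ω | ‖((inner ℝ (x ω) (θ - θstar) : ℝ) - ε ω) • x ω‖ > z} := by
      rw [hrep z]
      calc Lμ * ENNReal.ofReal ((z + C * M) ^ (-α))
          = ∫⁻ v, ENNReal.ofReal (‖v‖ ^ α) * ENNReal.ofReal ((z + C * M) ^ (-α)) ∂μ :=
            (lintegral_mul_const'' _ hfmeas.aemeasurable).symm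
        _ = ∫⁻ v, ENNReal.ofReal (‖v‖ ^ α * (z + C * M) ^ (-α)) ∂μ := by
            congr 1; ext v
            rw [ENNReal.ofReal_mul (Real.rpow_nonneg (norm_nonneg v) α)]
        _ ≤ ∫⁻ v, ν {e : ℝ | ‖((inner ℝ v (θ - θstar) : ℝ) - e) • v‖ > z} ∂μ :=
            lintegral_mono_ae hpt
    have := ENNReal.toReal_mono (measure_ne_top P _) hint
    rw [ENNReal.toReal_mul, ENNReal.toReal_ofReal (Real.rpow_nonneg hzCM.le _)] at this
    exact this
  -- final squeeze
  intro t ht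
  have key : ∀ a b : ℝ, Tendsto (fun z : ℝ => ((t * z + a) ^ (-α)) / ((z + b) ^ (-α)))
      atTop (𝓝 (t ^ (-α))) := by
    intro a b
    have hnum : Tendsto (fun z : ℝ => t * z + a) atTop atTop :=
      tendsto_atTop_add_const_right _ a (tendsto_id.const_mul_atTop ht)
    have hden : Tendsto (fun z : ℝ => z + b) atTop atTop :=
      tendsto_atTop_add_const_right _ b tendsto_id
    have h0 : Tendsto (fun z : ℝ => (t * z + a) / (z + b)) atTop (𝓝 t) := by
      have hinv : Tendsto (fun z : ℝ => z⁻¹) atTop (𝓝 (0:ℝ)) := tendsto_inv_atTop_zero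
      have h1 : Tendsto (fun z : ℝ => (t + a * z⁻¹) / (1 + b * z⁻¹)) atTop
          (𝓝 ((t + a * 0) / (1 + b * 0))) := by
        exact Tendsto.div
          (tendsto_const_nhds.add (tendsto_const_nhds.mul hinv))
          (tendsto_const_nhds.add (tendsto_const_nhds.mul hinv)) (by norm_num)
      simp only [mul_zero, add_zero] at h1
      rw [div_one] at h1
      refine Tendsto.congr' ?_ h1
      filter_upwards [eventually_gt_atTop 0, hden.eventually_gt_atTop 0] with z hz hzb
      field_simp
    have h2 : Tendsto (fun z : ℝ => ((t * z + a) / (z + b)) ^ (-α)) atTop (𝓝 (t ^ (-α))) :=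
      h0.rpow_const (Or.inl ht.ne')
    refine Tendsto.congr' ?_ h2
    filter_upwards [hnum.eventually_ge_atTop 0, hden.eventually_ge_atTop 0] with z hz1 hz2
    exact Real.div_rpow hz1 hz2 (-α)
  have hg1 : Tendsto (fun z : ℝ => ((t * z + C * M) ^ (-α)) / ((z - C * M) ^ (-α)))
      atTop (𝓝 (t ^ (-α))) := by
    simpa [sub_eq_add_neg] using key (C * M) (-(C * M))
  have hg2 : Tendsto (fun z : ℝ => ((t * z - C * M) ^ (-α)) / ((z + C * M) ^ (-α)))
      atTop (𝓝 (t ^ (-α))) := by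
    simpa [sub_eq_add_neg] using key (-(C * M)) (C * M)
  have hev : ∀ᶠ z : ℝ in atTop, M * (C + 1) ≤ z ∧ M * (C + 1) ≤ t * z := by
    filter_upwards [eventually_ge_atTop (M * (C + 1)),
      eventually_ge_atTop (M * (C + 1) / t)] with z h1 h2
    exact ⟨h1, (div_le_iff₀ ht).mp h2 |>.trans_eq (mul_comm _ _)⟩
  show Tendsto (fun z : ℝ => F (t * z) / F z) atTop (𝓝 (t ^ (-α)))
  refine tendsto_of_tendsto_of_tendsto_of_le_of_le' hg1 hg2 ?_ ?_
  · filter_upwards [hev] with z ⟨h1, h2⟩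
    have hd : (L * ((t * z + C * M) ^ (-α))) / (L * ((z - C * M) ^ (-α)))
        ≤ F (t * z) / F z :=
      div_le_div₀ (hFpos (t * z)).le (hlb (t * z) h2) (hFpos z) (hub z h1)
    rwa [mul_div_mul_left _ _ hL.ne'] at hd
  · filter_upwards [hev] with z ⟨h1, h2⟩
    have hztCM : 0 < t * z - C * M := by
      have : (1:ℝ) ≤ M * (C + 1) := by nlinarith
      nlinarith
    have hzCM : 0 < z + C * M := by
      have h3 : (1:ℝ) ≤ z := le_trans (by nlinarith) h1
      nlinarith
    have hd : F (t * z) / F z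
        ≤ (L * ((t * z - C * M) ^ (-α))) / (L * ((z + C * M) ^ (-α))) :=
      div_le_div₀ (mul_nonneg hL.le (Real.rpow_nonneg hztCM.le _)) (hub (t * z) h2)
        (mul_pos hL (Real.rpow_pos_of_pos hzCM _)) (hlb z h1)
    rwa [mul_div_mul_left _ _ hL.ne'] at hd
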